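/- Let F, G satisfy F + Fᵀ + G Gᵀ = 0, let Φ(t,s) be the transition matrix of ξ̇ = F(t)ξ (so ∂Φ/∂t = F(t)Φ, Φ(s,s)=I), and define M(t,s) = ∫ₛᵗ G(τ)ᵀ Φ(τ,s) dτ. Then Δ(t,s) := M(t,s)M(t,s)ᵀ + ∫ₛᵗ M(t,τ)G(τ)G(τ)ᵀM(t,τ)ᵀ dτ − ∫ₛᵗ (M(t,τ)G(τ) + G(τ)ᵀM(t,τ)ᵀ) dτ vanishes identically for all s ≤ t. -/

import Mathlib

open Matrix intervalIntegral

section Helpers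
open Set


lemma aux_hasDerivAt_mul_of_eq_zero {C D : ℝ → ℝ} {s d : ℝ} (hC : ContinuousAt C s)
    (hD : HasDerivAt D d s) (h0 : D s = 0) :
    HasDerivAt (fun u => C u * D u) (C s * d) s := by
  rw [hasDerivAt_iff_tendsto_slope] at hD ⊢
  have hs : slope (fun u => C u * D u) s = fun u => C u * slope D s u := by
    funext u
    simp [slope_def_field, h0, mul_div_assoc]
  rw [hs]
  have hCt : Filter.Tendsto C (nhdsWithin s {s}ᶜ) (nhds (C s)) :=
    hC.tendsto.mono_left nhdsWithin_le_nhds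
  simpa using hCt.mul hD

lemma aux_hasDerivAt_matmul {a b c : ℕ} {A : ℝ → Matrix (Fin a) (Fin b) ℝ}
    {B : ℝ → Matrix (Fin b) (Fin c) ℝ} {A' : Matrix (Fin a) (Fin b) ℝ}
    {B' : Matrix (Fin b) (Fin c) ℝ} {s : ℝ}
    (hA : ∀ i j, HasDerivAt (fun u => A u i j) (A' i j) s)
    (hB : ∀ i j, HasDerivAt (fun u => B u i j) (B' i j) s) :
    ∀ i j, HasDerivAt (fun u => (A u * B u) i j) ((A' * B s + A s * B') i j) s := by
  intro i j
  simp only [Matrix.mul_apply, Matrix.add_apply]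
  rw [← Finset.sum_add_distrib]
  exact HasDerivAt.fun_sum fun k _ => (hA i k).mul (hB k j)

lemma aux_cont_matmul {a b c : ℕ} {A : ℝ → Matrix (Fin a) (Fin b) ℝ}
    {B : ℝ → Matrix (Fin b) (Fin c) ℝ}
    (hA : ∀ i j, Continuous fun u => A u i j) (hB : ∀ i j, Continuous fun u => B u i j) :
    ∀ i j, Continuous fun u => (A u * B u) i j := by
  intro i j
  simp only [Matrix.mul_apply]
  exact continuous_finset_sum _ fun k _ => (hA i k).mul (hB k j)

lemma aux_triple_apply {a b c d : ℕ} (A : Matrix (Fin a) (Fin b) ℝ) (B : Matrix (Fin b) (Fin c) ℝ)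
    (C : Matrix (Fin c) (Fin d) ℝ) (i : Fin a) (j : Fin d) :
    (A * (B * C)) i j = ∑ k, ∑ l, A i k * (B k l * C l j) := by
  simp [Matrix.mul_apply, Finset.mul_sum]

lemma aux_semigroup {n : ℕ} (F : ℝ → Matrix (Fin n) (Fin n) ℝ)
    (hFcont : ∀ i j, Continuous fun t => F t i j)
    (Φ : ℝ → ℝ → Matrix (Fin n) (Fin n) ℝ)
    (hΦinit : ∀ s, Φ s s = 1)
    (hΦ : ∀ (s t : ℝ) (i j : Fin n), HasDerivAt (fun τ => Φ τ s i j) ((F t * Φ t s) i j) t)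
    (s u : ℝ) : Φ u s = Φ u 0 * Φ 0 s := by
  set a : ℝ := min u 0 - 1 with ha_def
  set b : ℝ := max u 0 + 1 with hb_def
  have hau : a < u := by simp only [ha_def]; have := min_le_left u (0:ℝ); linarith
  have hub : u < b := by simp only [hb_def]; have := le_max_left u (0:ℝ); linarith
  have ha0 : a < 0 := by simp only [ha_def]; have := min_le_right u (0:ℝ); linarith
  have h0b : (0:ℝ) < b := by simp only [hb_def]; have := le_max_right u (0:ℝ); linarith
  -- bound on F over [a,b]
  have hbnd : ∀ ij : Fin n × Fin n, ∃ D : ℝ, ∀ τ ∈ Icc a b, |F τ ij.1 ij.2| ≤ D := by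
    intro ij
    obtain ⟨D, hD⟩ := (isCompact_Icc (a := a) (b := b)).exists_bound_of_continuousOn
      (hFcont ij.1 ij.2).continuousOn
    exact ⟨D, fun τ hτ => hD τ hτ⟩
  choose Cf hCf using hbnd
  set C : ℝ := ∑ ij : Fin n × Fin n, |Cf ij| with hC_def
  have hC0 : 0 ≤ C := Finset.sum_nonneg fun ij _ => abs_nonneg _
  have hCF : ∀ τ ∈ Icc a b, ∀ i j, |F τ i j| ≤ C := by
    intro τ hτ i j
    calc |F τ i j| ≤ Cf (i, j) := hCf (i, j) τ hτ
      _ ≤ |Cf (i, j)| := le_abs_self _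
      _ ≤ C := Finset.single_le_sum (f := fun ij => |Cf ij|)
          (fun ij _ => abs_nonneg _) (Finset.mem_univ (i, j))
  -- clamped vector field
  set π : ℝ → ℝ := fun τ => max a (min τ b) with hπ_def
  have hπmem : ∀ τ, π τ ∈ Icc a b := by
    intro τ
    constructor
    · exact le_max_left _ _
    · simp only [hπ_def, max_le_iff]
      exact ⟨by linarith, min_le_right _ _⟩
  have hπeq : ∀ τ ∈ Ioo a b, π τ = τ := by
    intro τ hτ
    simp only [hπ_def, min_eq_left hτ.2.le, max_eq_right hτ.1.le]
  set v : ℝ → (Fin n → Fin n → ℝ) → (Fin n → Fin n → ℝ) :=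
    fun τ X i j => ∑ k, F (π τ) i k * X k j with hv_def
  set K : NNReal := Real.toNNReal (n * C) with hK_def
  have hlip : ∀ τ, LipschitzOnWith K (v τ) univ := by
    intro τ
    apply LipschitzWith.lipschitzOnWith
    apply LipschitzWith.of_dist_le_mul
    intro X Y
    have hKnn : (0:ℝ) ≤ (K : ℝ) * dist X Y := by positivity
    rw [dist_pi_le_iff hKnn]
    intro i
    rw [dist_pi_le_iff hKnn]
    intro j
    have : v τ X i j - v τ Y i j = ∑ k, F (π τ) i k * (X k j - Y k j) := by
      simp only [hv_def, ← Finset.sum_sub_distrib]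
      congr 1; funext k; ring
    rw [Real.dist_eq, this]
    calc |∑ k, F (π τ) i k * (X k j - Y k j)|
        ≤ ∑ k, |F (π τ) i k * (X k j - Y k j)| := Finset.abs_sum_le_sum_abs _ _
      _ ≤ ∑ _k : Fin n, C * dist X Y := by
          apply Finset.sum_le_sum
          intro k _
          rw [abs_mul]
          have h1 : |F (π τ) i k| ≤ C := hCF _ (hπmem τ) i k
          have h2 : |X k j - Y k j| ≤ dist X Y := by
            calc |X k j - Y k j| = dist (X k j) (Y k j) := (Real.dist_eq _ _).symm
              _ ≤ dist (X k) (Y k) := dist_le_pi_dist _ _ _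
              _ ≤ dist X Y := dist_le_pi_dist _ _ _
          exact mul_le_mul h1 h2 (abs_nonneg _) hC0
      _ = (n * C) * dist X Y := by simp [Finset.sum_const]; ring
      _ ≤ (K : ℝ) * dist X Y := by
          apply mul_le_mul_of_nonneg_right _ dist_nonneg
          simp [hK_def]
  -- the two solutions
  set f : ℝ → (Fin n → Fin n → ℝ) := fun τ i j => Φ τ s i j with hf_def
  set g : ℝ → (Fin n → Fin n → ℝ) := fun τ i j => (Φ τ 0 * Φ 0 s) i j with hg_def
  have hf' : ∀ τ ∈ Ioo a b, HasDerivAt f (v τ (f τ)) τ := by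
    intro τ hτ
    rw [hasDerivAt_pi]
    intro i
    rw [hasDerivAt_pi]
    intro j
    have := hΦ s τ i j
    refine this.congr_deriv ?_
    simp only [hv_def, hf_def, Matrix.mul_apply, hπeq τ hτ]
  have hg' : ∀ τ ∈ Ioo a b, HasDerivAt g (v τ (g τ)) τ := by
    intro τ hτ
    rw [hasDerivAt_pi]
    intro i
    rw [hasDerivAt_pi]
    intro j
    have key : HasDerivAt (fun τ => (Φ τ 0 * Φ 0 s) i j)
        (((F τ * Φ τ 0) * Φ 0 s) i j) τ := by
      simp only [Matrix.mul_apply]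
      exact HasDerivAt.fun_sum fun k _ => (hΦ 0 τ i k).mul_const (Φ 0 s k j)
    refine key.congr_deriv ?_
    simp only [hv_def, hg_def, hπeq τ hτ, Matrix.mul_apply, Finset.sum_mul, Finset.mul_sum]
    rw [Finset.sum_comm]
    congr 1; funext k; congr 1; funext l; ring
  have hfc : Continuous f := continuous_pi fun i => continuous_pi fun j =>
    continuous_iff_continuousAt.2 fun τ => (hΦ s τ i j).continuousAt
  have hgc : Continuous g := continuous_pi fun i => continuous_pi fun j => by
    have : (fun τ => g τ i j) = fun τ => ∑ k, Φ τ 0 i k * Φ 0 s k j := by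
      funext τ; simp [hg_def, Matrix.mul_apply]
    rw [this]
    exact continuous_finset_sum _ fun k _ =>
      (continuous_iff_continuousAt.2 fun τ => (hΦ 0 τ i k).continuousAt).mul continuous_const
  have heq0 : f 0 = g 0 := by
    funext i j
    simp [hf_def, hg_def, hΦinit 0]
  have := ODE_solution_unique_of_mem_Icc (v := v) (s := fun _ => univ) (K := K) (fun τ _ => hlip τ)
    ⟨ha0, h0b⟩ hfc.continuousOn (fun τ hτ => hf' τ hτ) (fun _ _ => trivial)
    hgc.continuousOn (fun τ hτ => hg' τ hτ) (fun _ _ => trivial) heq0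
  have hu := this ⟨hau.le, hub.le⟩
  ext i j
  exact congrFun (congrFun hu i) j

end Helpers

theorem stmt_19 {n p : ℕ}
    (F : ℝ → Matrix (Fin n) (Fin n) ℝ) (G : ℝ → Matrix (Fin n) (Fin p) ℝ)
    (hFcont : ∀ i j, Continuous fun t => F t i j)
    (hGcont : ∀ i j, Continuous fun t => G t i j)
    (hLyap : ∀ t, F t + (F t)ᵀ + G t * (G t)ᵀ = 0)
    -- Φ is the transition matrix of ξ̇ = F(t) ξ:
    (Φ : ℝ → ℝ → Matrix (Fin n) (Fin n) ℝ)
    (hΦinit : ∀ s, Φ s s = 1)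
    (hΦ : ∀ (s t : ℝ) (i j : Fin n), HasDerivAt (fun τ => Φ τ s i j) ((F t * Φ t s) i j) t)
    -- M(t,s) = ∫ₛᵗ G(τ)ᵀ Φ(τ,s) dτ :
    (M : ℝ → ℝ → Matrix (Fin p) (Fin n) ℝ)
    (hM : ∀ t s, M t s = Matrix.of fun i j => ∫ τ in s..t, ((G τ)ᵀ * Φ τ s) i j)
    -- Δ(t,s) = M Mᵀ + ∫ₛᵗ M G Gᵀ Mᵀ dτ − ∫ₛᵗ (M G + Gᵀ Mᵀ) dτ :
    (Δ : ℝ → ℝ → Matrix (Fin p) (Fin p) ℝ)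
    (hΔ : ∀ t s, Δ t s = M t s * (M t s)ᵀ
        + Matrix.of (fun i j => ∫ τ in s..t, (M t τ * G τ * (G τ)ᵀ * (M t τ)ᵀ) i j)
        - Matrix.of (fun i j => ∫ τ in s..t, (M t τ * G τ + (G τ)ᵀ * (M t τ)ᵀ) i j)) :
    ∀ s t : ℝ, s ≤ t → Δ t s = 0 := by
  have hsemi := aux_semigroup F hFcont Φ hΦinit hΦ
  set W : ℝ → Matrix (Fin n) (Fin n) ℝ := fun u => Φ u 0 with hW_def
  set Ψ : ℝ → Matrix (Fin n) (Fin n) ℝ := fun u => Φ 0 u with hΨ_def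
  have hinv1 : ∀ u, W u * Ψ u = 1 := by
    intro u
    rw [hW_def, hΨ_def, ← hsemi u u, hΦinit u]
  have hinv2 : ∀ u, Ψ u * W u = 1 := fun u => mul_eq_one_comm.mp (hinv1 u)
  have hWc : ∀ i j, Continuous fun u => W u i j := fun i j =>
    continuous_iff_continuousAt.2 fun τ => (hΦ 0 τ i j).continuousAt
  have hWmc : Continuous W := continuous_matrix fun i j => hWc i j
  have hΨmc : Continuous Ψ := by
    have hdet : ∀ u, IsUnit (W u).det := fun u => Matrix.isUnit_det_of_left_inverse (hinv2 u)
    have h1 : Ψ = fun u => ((W u).det)⁻¹ • (W u).adjugate := by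
      funext u
      have hW : (W u)⁻¹ = Ψ u := Matrix.inv_eq_left_inv (hinv2 u)
      rw [← hW, Matrix.inv_def, Ring.inverse_eq_inv']
    rw [h1]
    exact (hWmc.matrix_det.inv₀ fun u => (hdet u).ne_zero).smul hWmc.matrix_adjugate
  have hΨc : ∀ i j, Continuous fun u => Ψ u i j := fun i j =>
    (continuous_apply j).comp ((continuous_apply i).comp hΨmc)
  -- derivative of Ψ
  have hΨ' : ∀ (u : ℝ) (i j : Fin n), HasDerivAt (fun r => Ψ r i j) ((-(Ψ u * F u)) i j) u := by
    intro u i j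
    have hkey : ∀ r, Ψ r i j = Ψ u i j + (Ψ r * ((W u - W r) * Ψ u)) i j := by
      intro r
      have hm : Ψ r * ((W u - W r) * Ψ u) = Ψ r - Ψ u := by
        rw [Matrix.sub_mul, Matrix.mul_sub, hinv1 u, Matrix.mul_one, ← Matrix.mul_assoc,
          hinv2 r, Matrix.one_mul]
      rw [hm]
      simp [Matrix.sub_apply]
    have hD : HasDerivAt
        (fun r => Ψ u i j + ∑ k, ∑ l, Ψ r i k * ((W u k l - W r k l) * Ψ u l j))
        (∑ k, ∑ l, Ψ u i k * (-((F u * W u) k l) * Ψ u l j)) u := by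
      apply HasDerivAt.const_add
      apply HasDerivAt.fun_sum; intro k _
      apply HasDerivAt.fun_sum; intro l _
      have hDkl : HasDerivAt (fun r => (W u k l - W r k l) * Ψ u l j)
          (-((F u * W u) k l) * Ψ u l j) u := by
        have := ((hasDerivAt_const u (W u k l)).sub (hΦ 0 u k l)).mul_const (Ψ u l j)
        simpa using this
      exact aux_hasDerivAt_mul_of_eq_zero (hΨc i k).continuousAt hDkl (by ring)
    have hfun : (fun r => Ψ r i j)
        = fun r => Ψ u i j + ∑ k, ∑ l, Ψ r i k * ((W u k l - W r k l) * Ψ u l j) := by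
      funext r
      rw [hkey r, aux_triple_apply]
      simp [Matrix.sub_apply]
    rw [hfun]
    convert hD using 1
    have hm2 : Ψ u * (-(F u * W u) * Ψ u) = -(Ψ u * F u) := by
      rw [Matrix.neg_mul, Matrix.mul_assoc, hinv1 u, Matrix.mul_one, Matrix.mul_neg]
    rw [← hm2, aux_triple_apply]
    simp [Matrix.neg_apply]
  -- the primitive A and the representation of M
  set gW : ℝ → Matrix (Fin p) (Fin n) ℝ := fun τ => (G τ)ᵀ * W τ with hgW_def
  have hGTc : ∀ (i : Fin p) (j : Fin n), Continuous fun τ => (G τ)ᵀ i j := fun i j => by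
    simpa only [Matrix.transpose_apply] using hGcont j i
  have hgWc : ∀ i j, Continuous fun τ => gW τ i j := aux_cont_matmul hGTc hWc
  set A : ℝ → Matrix (Fin p) (Fin n) ℝ :=
    fun u => Matrix.of fun i j => ∫ τ in (0:ℝ)..u, gW τ i j with hA_def
  have hA' : ∀ (u : ℝ) (i : Fin p) (j : Fin n), HasDerivAt (fun r => A r i j) (gW u i j) u := by
    intro u i j
    exact integral_hasDerivAt_right ((hgWc i j).intervalIntegrable _ _)
      ((hgWc i j).stronglyMeasurableAtFilter _ _) (hgWc i j).continuousAt
  have hAc : ∀ i j, Continuous fun u => A u i j := fun i j =>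
    continuous_iff_continuousAt.2 fun u => (hA' u i j).continuousAt
  have hMrep : ∀ u r, M u r = (A u - A r) * Ψ r := by
    intro u r
    rw [hM u r]
    ext i j
    have h1 : ∀ τ, ((G τ)ᵀ * Φ τ r) i j = ∑ k, gW τ i k * Ψ r k j := by
      intro τ
      rw [hsemi r τ]
      rw [show Φ τ 0 = W τ from rfl, show Φ 0 r = Ψ r from rfl, ← Matrix.mul_assoc]
      exact Matrix.mul_apply
    simp only [Matrix.of_apply, h1]
    rw [intervalIntegral.integral_finset_sum (f := fun k τ => gW τ i k * Ψ r k j)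
      (fun k _ => (((hgWc i k).mul continuous_const).intervalIntegrable _ _))]
    have h2 : ∀ k, (∫ τ in r..u, gW τ i k * Ψ r k j)
        = (A u i k - A r i k) * Ψ r k j := by
      intro k
      rw [intervalIntegral.integral_mul_const]
      congr 1
      have := intervalIntegral.integral_interval_sub_left
        ((hgWc i k).intervalIntegrable (μ := MeasureTheory.volume) (0:ℝ) u)
        ((hgWc i k).intervalIntegrable (μ := MeasureTheory.volume) (0:ℝ) r)
      simpa [hA_def] using this.symm
    simp only [h2, Matrix.mul_apply, Matrix.sub_apply]
  -- main argument
  intro s t _hst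
  have hMc : ∀ i j, Continuous fun τ => M t τ i j := by
    intro i j
    have h1 : (fun τ => M t τ i j) = fun τ => ∑ k, (A t i k - A τ i k) * Ψ τ k j := by
      funext τ
      rw [hMrep t τ]
      simp [Matrix.mul_apply, Matrix.sub_apply]
    rw [h1]
    exact continuous_finset_sum _ fun k _ => ((continuous_const.sub (hAc i k)).mul (hΨc k j))
  have hM' : ∀ (r : ℝ) (i : Fin p) (j : Fin n),
      HasDerivAt (fun τ => M t τ i j) ((-(M t r * F r) - (G r)ᵀ) i j) r := by
    intro r i j
    have hfun : (fun τ => M t τ i j) = fun τ => ((A t - A τ) * Ψ τ) i j := by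
      funext τ; rw [hMrep t τ]
    rw [hfun]
    have hAd : ∀ (i : Fin p) (j : Fin n),
        HasDerivAt (fun τ => (A t - A τ) i j) ((-(gW r)) i j) r := by
      intro i j
      have := (hasDerivAt_const r (A t i j)).fun_sub (hA' r i j)
      simpa [Matrix.sub_apply, Matrix.neg_apply] using this
    have hd := aux_hasDerivAt_matmul hAd (hΨ' r) i j
    have e1 : -(gW r) * Ψ r = -((G r)ᵀ) := by
      rw [hgW_def, Matrix.neg_mul, Matrix.mul_assoc, hinv1 r, Matrix.mul_one]
    have e2 : (A t - A r) * -(Ψ r * F r) = -(M t r * F r) := by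
      rw [Matrix.mul_neg, hMrep t r, Matrix.mul_assoc]
    have e3 : -(M t r * F r) - (G r)ᵀ = -(gW r) * Ψ r + (A t - A r) * -(Ψ r * F r) := by
      rw [e1, e2]; abel
    rw [e3]
    exact hd
  -- continuity of the integrands
  have hMTc : ∀ (i : Fin n) (j : Fin p), Continuous fun τ => (M t τ)ᵀ i j := fun i j => by
    simpa only [Matrix.transpose_apply] using hMc j i
  have hc2 : ∀ i j, Continuous fun σ => (M t σ * G σ * (G σ)ᵀ * (M t σ)ᵀ) i j :=
    aux_cont_matmul (aux_cont_matmul (aux_cont_matmul hMc hGcont) hGTc) hMTc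
  have hc3 : ∀ i j, Continuous fun σ => (M t σ * G σ + (G σ)ᵀ * (M t σ)ᵀ) i j := by
    intro i j
    simp only [Matrix.add_apply]
    exact (aux_cont_matmul hMc hGcont i j).add (aux_cont_matmul hGTc hMTc i j)
  -- zero derivative of Δ entries
  have hδ' : ∀ (r : ℝ) (i j : Fin p), HasDerivAt (fun τ => Δ t τ i j) 0 r := by
    intro r i j
    have hfun : (fun τ => Δ t τ i j) = fun τ => (M t τ * (M t τ)ᵀ) i j
        + (∫ σ in τ..t, (M t σ * G σ * (G σ)ᵀ * (M t σ)ᵀ) i j)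
        - (∫ σ in τ..t, (M t σ * G σ + (G σ)ᵀ * (M t σ)ᵀ) i j) := by
      funext τ
      rw [hΔ t τ]
      simp [Matrix.sub_apply, Matrix.add_apply]
    rw [hfun]
    have hMT' : ∀ (i : Fin n) (j : Fin p),
        HasDerivAt (fun τ => (M t τ)ᵀ i j) (((-(M t r * F r) - (G r)ᵀ)ᵀ) i j) r := by
      intro i j
      simpa only [Matrix.transpose_apply] using hM' r j i
    have d1 := aux_hasDerivAt_matmul (hM' r) hMT' i j
    have d2 : HasDerivAt (fun τ => ∫ σ in τ..t, (M t σ * G σ * (G σ)ᵀ * (M t σ)ᵀ) i j)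
        (-((M t r * G r * (G r)ᵀ * (M t r)ᵀ) i j)) r :=
      integral_hasDerivAt_left ((hc2 i j).intervalIntegrable _ _)
        ((hc2 i j).stronglyMeasurableAtFilter _ _) (hc2 i j).continuousAt
    have d3 : HasDerivAt (fun τ => ∫ σ in τ..t, (M t σ * G σ + (G σ)ᵀ * (M t σ)ᵀ) i j)
        (-((M t r * G r + (G r)ᵀ * (M t r)ᵀ) i j)) r :=
      integral_hasDerivAt_left ((hc3 i j).intervalIntegrable _ _)
        ((hc3 i j).stronglyMeasurableAtFilter _ _) (hc3 i j).continuousAt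
    have dall := (d1.fun_add d2).fun_sub d3
    refine dall.congr_deriv ?_
    have hzero : ((-(M t r * F r) - (G r)ᵀ) * (M t r)ᵀ + M t r * (-(M t r * F r) - (G r)ᵀ)ᵀ)
        - (M t r * G r * (G r)ᵀ * (M t r)ᵀ) + (M t r * G r + (G r)ᵀ * (M t r)ᵀ) = 0 := by
      calc ((-(M t r * F r) - (G r)ᵀ) * (M t r)ᵀ + M t r * (-(M t r * F r) - (G r)ᵀ)ᵀ)
            - (M t r * G r * (G r)ᵀ * (M t r)ᵀ) + (M t r * G r + (G r)ᵀ * (M t r)ᵀ)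
          = -(M t r * ((F r + (F r)ᵀ + G r * (G r)ᵀ) * (M t r)ᵀ)) := by
            simp only [Matrix.transpose_sub, Matrix.transpose_neg, Matrix.transpose_mul,
              Matrix.transpose_transpose, Matrix.neg_mul, Matrix.mul_neg, Matrix.sub_mul,
              Matrix.mul_sub, Matrix.add_mul, Matrix.mul_add, Matrix.mul_assoc, neg_neg]
            abel
        _ = 0 := by rw [hLyap r]; simp
    have hz := congrFun (congrFun hzero i) j
    simp only [Matrix.add_apply, Matrix.sub_apply, Matrix.zero_apply, Matrix.neg_apply] at hz ⊢
    linarith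
  -- conclude
  have hMt : M t t = 0 := by
    rw [hM t t]
    ext i j
    simp [intervalIntegral.integral_same]
  have hΔt : Δ t t = 0 := by
    rw [hΔ t t, hMt]
    ext i j
    simp [intervalIntegral.integral_same]
  ext i j
  have hconst : Δ t s i j = Δ t t i j :=
    is_const_of_deriv_eq_zero (fun x => (hδ' x i j).differentiableAt)
      (fun x => (hδ' x i j).deriv) s t
  rw [Matrix.zero_apply, hconst, hΔt, Matrix.zero_apply]
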